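/- Let (A, [·,·], ρ) be a Lie algebroid, H a 3-form, π a bivector, and N : A → A a C∞-linear bundle map such that N∘π^# = π^#∘N*. Then for all X, Y ∈ Γ(A): ([π, [N̲, H̲]_RN]_RN + [N̲, [π, H̲]_RN]_RN)(X, Y) = 2 H̲(π, NX, Y) + 2 H̲(π, X, NY). -/

import Mathlib

open Finset

section Framework

variable {V : Type*} [AddCommGroup V] [Module ℝ V]

/-- The Koszul sign `ε(σ)` of a permutation `σ` acting on homogeneous elements whose
degrees are given by `d`. -/
def koszulSign {n : ℕ} (d : Fin n → ℤ) (σ : Equiv.Perm (Fin n)) : ℤ :=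
  ∏ p ∈ Finset.univ.filter (fun p : Fin n × Fin n => p.1 < p.2 ∧ σ p.2 < σ p.1),
    (-1 : ℤ) ^ (d (σ p.1) * d (σ p.2)).natAbs

/-- The `(k, n-k)`-unshuffles: permutations of `Fin n` which are increasing on the
first `k` indices and on the remaining ones. -/
def unshuffles (k n : ℕ) : Finset (Equiv.Perm (Fin n)) :=
  Finset.univ.filter (fun σ =>
    (∀ i j : Fin n, i < j → (j : ℕ) < k → σ i < σ j) ∧
    (∀ i j : Fin n, i < j → k ≤ (i : ℕ) → σ i < σ j))

/-- A (raw) vector valued `k`-form on the graded vector space with grading `𝒢`: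
it assigns, to homogeneous elements of degrees `d 0, …, d (k-1)`, an element of `V`. -/
abbrev GForm (𝒢 : ℤ → Submodule ℝ V) (k : ℕ) : Type _ :=
  (d : Fin k → ℤ) → ((i : Fin k) → 𝒢 (d i)) → V

/-- Transport of a vector valued form along an equality of arities. -/
def castForm {𝒢 : ℤ → Submodule ℝ V} {m n : ℕ} (h : m = n) (K : GForm 𝒢 m) : GForm 𝒢 n :=
  h ▸ K

variable (𝒢 : ℤ → Submodule ℝ V)

/-- Projection on the homogeneous component of degree `i`. -/
def prj [DirectSum.Decomposition 𝒢] (i : ℤ) (v : V) : 𝒢 i :=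
  DirectSum.decompose 𝒢 v i

/-- Insertion of a `k`-form `K` of degree `δK` into an `(l+1)`-form `L`:
`ι_K L (X_1,…,X_{k+l}) = Σ_{σ ∈ Sh(k,l)} ε(σ) L(K(X_{σ(1)},…,X_{σ(k)}), X_{σ(k+1)},…)`. -/
def insertPos [DirectSum.Decomposition 𝒢] {k l : ℕ} (δK : ℤ) (K : GForm 𝒢 k)
    (L : GForm 𝒢 (l + 1)) : GForm 𝒢 (k + l) := fun d x =>
  ∑ σ ∈ unshuffles k (k + l),
    koszulSign d σ •
      L (Fin.cons ((∑ i : Fin k, d (σ (Fin.castAdd l i))) + δK)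
          (fun j : Fin l => d (σ (Fin.natAdd k j))))
        (Fin.cons
          (prj 𝒢 ((∑ i : Fin k, d (σ (Fin.castAdd l i))) + δK)
            (K (fun i => d (σ (Fin.castAdd l i))) (fun i => x (σ (Fin.castAdd l i)))))
          (fun j : Fin l => x (σ (Fin.natAdd k j))))

/-- Insertion operator `ι_K L` of a `k`-form of degree `δK` into an `l`-form. -/
def insertionOp [DirectSum.Decomposition 𝒢] {k l : ℕ} (δK : ℤ) (K : GForm 𝒢 k) :
    GForm 𝒢 l → GForm 𝒢 (k + l - 1) :=
  match l with
  | 0 => fun _ => fun _ _ => 0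
  | _ + 1 => fun L => insertPos 𝒢 δK K L

/-- A formal sum of vector valued forms of all arities. -/
abbrev MultiForm : Type _ := (k : ℕ) → GForm 𝒢 k

/-- A single `k`-form seen as a formal sum concentrated in arity `k`. -/
def singleF (k : ℕ) (K : GForm 𝒢 k) : MultiForm 𝒢 :=
  fun n => if h : n = k then castForm h.symm K else 0

/-- The Richardson–Nijenhuis bracket `[K,L] = ι_K L - (-1)^{K̄ L̄} ι_L K` of formal
sums of forms `K` (of degree `δK`) and `L` (of degree `δL`), computed aritywise. -/
def rnBracketM [DirectSum.Decomposition 𝒢] (δK δL : ℤ) (K L : MultiForm 𝒢) : MultiForm 𝒢 :=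
  fun n =>
    (∑ p ∈ (Finset.range (n + 2)).attach,
      castForm (by have := Finset.mem_range.mp p.2; omega)
        (insertionOp 𝒢 δK (K p.1) (L (n + 1 - p.1))))
    - ((-1 : ℤ) ^ (δK * δL).natAbs) •
      (∑ p ∈ (Finset.range (n + 2)).attach,
        castForm (by have := Finset.mem_range.mp p.2; omega)
          (insertionOp 𝒢 δL (L p.1) (K (n + 1 - p.1))))

/-- `K` is a graded symmetric vector valued `k`-form of degree `δ`. -/
structure IsSymFormOfDeg {k : ℕ} (δ : ℤ) (K : GForm 𝒢 k) : Prop where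
  mem_grading : ∀ (d : Fin k → ℤ) (x : (i : Fin k) → 𝒢 (d i)), K d x ∈ 𝒢 ((∑ i, d i) + δ)
  map_add : ∀ (d : Fin k → ℤ) (x : (i : Fin k) → 𝒢 (d i)) (i : Fin k) (a b : 𝒢 (d i)),
    K d (Function.update x i (a + b)) = K d (Function.update x i a) + K d (Function.update x i b)
  map_smul : ∀ (d : Fin k → ℤ) (x : (i : Fin k) → 𝒢 (d i)) (i : Fin k) (c : ℝ) (a : 𝒢 (d i)),
    K d (Function.update x i (c • a)) = c • K d (Function.update x i a)
  symm : ∀ (d : Fin k → ℤ) (σ : Equiv.Perm (Fin k)) (x : (i : Fin k) → 𝒢 (d i)),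
    K (d ∘ σ) (fun i => x (σ i)) = koszulSign d σ • K d x

/-- The `L_∞` identities for a family `(l_i)` of symmetric vector valued forms of degree 1:
for each `n`, `Σ_{i+j=n+1} Σ_{σ ∈ Sh(i,j-1)} ε(σ) l_j (l_i (X_σ(1),…), X_…) = 0`. -/
def LInftyIdentity [DirectSum.Decomposition 𝒢] (l : MultiForm 𝒢) : Prop :=
  ∀ n : ℕ,
    (∑ p ∈ (Finset.range (n + 2)).attach,
      castForm (by have := Finset.mem_range.mp p.2; omega)
        (insertionOp 𝒢 1 (l p.1) (l (n + 1 - p.1)))) = (0 : GForm 𝒢 n)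

end Framework

section Gerstenhaber

variable {V : Type*} [AddCommGroup V] [Module ℝ V]

/-- A Gerstenhaber algebra structure on a graded vector space `(V, 𝒜)`: a graded
commutative associative product `wedge` together with a graded Lie bracket on the
shifted space which is a degree `i` derivation in each argument. -/
structure Gerstenhaber (𝒜 : ℤ → Submodule ℝ V) : Type _ where
  wedge : V →ₗ[ℝ] V →ₗ[ℝ] V
  bracket : V →ₗ[ℝ] V →ₗ[ℝ] V
  wedge_mem : ∀ (i j : ℤ) (x y : V), x ∈ 𝒜 i → y ∈ 𝒜 j → wedge x y ∈ 𝒜 (i + j)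
  bracket_mem : ∀ (i j : ℤ) (x y : V), x ∈ 𝒜 i → y ∈ 𝒜 j → bracket x y ∈ 𝒜 (i + j - 1)
  wedge_assoc : ∀ x y z, wedge (wedge x y) z = wedge x (wedge y z)
  wedge_comm : ∀ (i j : ℤ) (x y : V), x ∈ 𝒜 i → y ∈ 𝒜 j →
    wedge x y = ((-1 : ℤ) ^ (i * j).natAbs) • wedge y x
  bracket_antisymm : ∀ (i j : ℤ) (x y : V), x ∈ 𝒜 i → y ∈ 𝒜 j →
    bracket x y = -(((-1 : ℤ) ^ ((i - 1) * (j - 1)).natAbs) • bracket y x)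
  jacobi : ∀ (i j : ℤ) (x y z : V), x ∈ 𝒜 i → y ∈ 𝒜 j →
    bracket x (bracket y z) = bracket (bracket x y) z
      + ((-1 : ℤ) ^ ((i - 1) * (j - 1)).natAbs) • bracket y (bracket x z)
  leibniz : ∀ (i j : ℤ) (x y z : V), x ∈ 𝒜 i → y ∈ 𝒜 j →
    bracket x (wedge y z) = wedge (bracket x y) z
      + ((-1 : ℤ) ^ ((i - 1) * j).natAbs) • wedge y (bracket x z)

variable {𝒜 : ℤ → Submodule ℝ V}

/-- The grading of the graded vector space `E` with `E_{-k} := A^k`. -/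
abbrev negG (𝒜 : ℤ → Submodule ℝ V) : ℤ → Submodule ℝ V := fun i => 𝒜 (-i)

/-- Iterated wedge product of `k+1` elements. -/
def wedgeAll (G : Gerstenhaber 𝒜) : {k : ℕ} → (Fin (k + 1) → V) → V
  | 0, x => x 0
  | _ + 1, x => G.wedge (x 0) (wedgeAll G (fun i => x i.succ))

/-- The symmetric vector valued `k`-form `𝒩_k (P_1, …, P_k) := P_1 ∧ ⋯ ∧ P_k`. -/
def mathcalN (G : Gerstenhaber 𝒜) (𝒢 : ℤ → Submodule ℝ V) : (k : ℕ) → GForm 𝒢 k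
  | 0 => fun _ _ => 0
  | _ + 1 => fun _ x => wedgeAll G (fun i => (x i : V))

/-- The symmetric vector valued 2-form `l_2 (P_1, P_2) := (-1)^{|P_1|} [P_1, P_2]`. -/
def l2G (G : Gerstenhaber 𝒜) (𝒢 : ℤ → Submodule ℝ V) : GForm 𝒢 2 :=
  fun d x => ((-1 : ℤ) ^ (d 0).natAbs) • G.bracket (x 0) (x 1)

/-- The family `l_1 := 0`, `l_2`, and `l_i := ι_{l_2} 𝒩_{i-1}` for `i > 2`. -/
def lFormsG (G : Gerstenhaber 𝒜) (𝒢 : ℤ → Submodule ℝ V) [DirectSum.Decomposition 𝒢] :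
    (i : ℕ) → GForm 𝒢 i
  | 0 => 0
  | 1 => 0
  | 2 => l2G G 𝒢
  | i + 3 => castForm (by omega) (insertionOp 𝒢 1 (l2G G 𝒢) (mathcalN G 𝒢 (i + 2)))

end Gerstenhaber
section Algebroid

variable {V : Type*} [AddCommGroup V] [Module ℝ V]

/-- The grading of the graded vector space `Γ(∧A)[2]`, whose component of degree `i`
is `Γ(∧^{i+2} A)`. -/
abbrev shiftG (𝒜 : ℤ → Submodule ℝ V) : ℤ → Submodule ℝ V := fun i => 𝒜 (i + 2)

variable {𝒜 : ℤ → Submodule ℝ V}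

/-- The graded algebra `(V, 𝒜)` is a model of multivector fields: no negative degrees. -/
def IsMultivecGrading (𝒜 : ℤ → Submodule ℝ V) : Prop := ∀ i : ℤ, i < 0 → 𝒜 i = ⊥

/-- `D` is the extension by derivation of a `C^∞`-linear bundle map `N : A → A`:
it preserves the multivector degree, vanishes on functions and is a derivation of the
wedge product. -/
structure IsExtDer (G : Gerstenhaber 𝒜) (D : V →ₗ[ℝ] V) : Prop where
  grading : ∀ (k : ℤ) (x : V), x ∈ 𝒜 k → D x ∈ 𝒜 k
  on_fun : ∀ f : V, f ∈ 𝒜 0 → D f = 0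
  deriv : ∀ x y : V, D (G.wedge x y) = G.wedge (D x) y + G.wedge x (D y)

/-- The extension by derivation `N̲` of a bundle map, seen as a vector valued 1-form. -/
def extDerForm (𝒢 : ℤ → Submodule ℝ V) (D : V →ₗ[ℝ] V) : GForm 𝒢 1 :=
  fun _ x => D (x 0)

/-- An element of the graded vector space, seen as a vector valued 0-form. -/
def elemForm (𝒢 : ℤ → Submodule ℝ V) (v : V) : GForm 𝒢 0 :=
  fun _ _ => v

/-- A 1-form `α ∈ Γ(A^*)`, encoded through its contraction operator
`ι_α : Γ(∧^• A) → Γ(∧^{•-1} A)`, an odd derivation of the wedge product. -/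
structure OneForm (G : Gerstenhaber 𝒜) : Type _ where
  ctr : V →ₗ[ℝ] V
  ctr_mem : ∀ (i : ℤ) (x : V), x ∈ 𝒜 i → ctr x ∈ 𝒜 (i - 1)
  ctr_deriv : ∀ (i : ℤ) (x y : V), x ∈ 𝒜 i →
    ctr (G.wedge x y) = G.wedge (ctr x) y + ((-1 : ℤ) ^ i.natAbs) • G.wedge x (ctr y)

lemma wedge_mem_shift (G : Gerstenhaber 𝒜) {a b : ℤ} {Q R : V}
    (hQ : Q ∈ 𝒜 (a + 2)) (hR : R ∈ 𝒜 (b + 2)) : G.wedge Q R ∈ shiftG 𝒜 (a + b + 2) := by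
  have h := G.wedge_mem (a + 2) (b + 2) Q R hQ hR
  have e : (a + 2) + (b + 2) = a + b + 2 + 2 := by ring
  rwa [e] at h

/-- `c` is the extension by derivation `κ̲` of a `(k+1)`-form `κ ∈ Γ(∧^{k+1} A^*)`:
a graded symmetric vector valued `(k+1)`-form of degree `k-1` on `Γ(∧A)[2]`, vanishing
on functions and acting as a derivation in each argument. -/
structure IsFormExt (G : Gerstenhaber 𝒜) {k : ℕ} (c : GForm (shiftG 𝒜) (k + 1)) : Prop where
  symm : IsSymFormOfDeg (shiftG 𝒜) ((k : ℤ) - 1) c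
  on_fun : ∀ (d : Fin (k + 1) → ℤ) (x : (i : Fin (k + 1)) → shiftG 𝒜 (d i)),
    d 0 = -2 → c d x = 0
  deriv : ∀ (a b : ℤ) (Q R : V) (hQ : Q ∈ 𝒜 (a + 2)) (hR : R ∈ 𝒜 (b + 2))
      (ds : Fin k → ℤ) (xs : (i : Fin k) → shiftG 𝒜 (ds i)),
    c (Fin.cons (a + b + 2) ds)
        (Fin.cons (⟨G.wedge Q R, wedge_mem_shift G hQ hR⟩ : shiftG 𝒜 (a + b + 2)) xs)
      = G.wedge (c (Fin.cons a ds) (Fin.cons (⟨Q, hQ⟩ : shiftG 𝒜 a) xs)) R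
        + ((-1 : ℤ) ^ ((a + 2) * (b + 2)).natAbs) •
          G.wedge (c (Fin.cons b ds) (Fin.cons (⟨R, hR⟩ : shiftG 𝒜 b) xs)) Q

lemma mem_shift {i j : ℤ} (h : i + 2 = j) {x : V} (hx : x ∈ 𝒜 j) : x ∈ shiftG 𝒜 i := by
  show x ∈ 𝒜 (i + 2); rw [h]; exact hx

/-- A section `X ∈ Γ(A)` as a degree `-1` element of `Γ(∧A)[2]`. -/
def secE {X : V} (hX : X ∈ 𝒜 1) : shiftG 𝒜 (-1) := ⟨X, mem_shift (by norm_num) hX⟩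

/-- A bivector `π ∈ Γ(∧²A)` as a degree `0` element of `Γ(∧A)[2]`. -/
def bivE {p : V} (hp : p ∈ 𝒜 2) : shiftG 𝒜 0 := ⟨p, mem_shift (by norm_num) hp⟩

/-- Evaluation of (the arity 1 component of) a formal sum of vector valued forms
on one section. -/
def evalSec1 (F : MultiForm (shiftG 𝒜)) {X : V} (hX : X ∈ 𝒜 1) : V :=
  F 1 (fun _ => -1) (fun _ => secE hX)

/-- Evaluation of (the arity 2 component of) a formal sum of vector valued forms
on two sections. -/
def evalSec2 (F : MultiForm (shiftG 𝒜)) {X Y : V} (hX : X ∈ 𝒜 1) (hY : Y ∈ 𝒜 1) : V :=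
  F 2 (fun _ => -1) ![secE hX, secE hY]

/-- Evaluation of a vector valued 2-form on two sections. -/
def eval2Sec (c : GForm (shiftG 𝒜) 2) {X Y : V} (hX : X ∈ 𝒜 1) (hY : Y ∈ 𝒜 1) : V :=
  c (fun _ => -1) ![secE hX, secE hY]

/-- Evaluation of a vector valued 3-form on three sections. -/
def eval3Sec (c : GForm (shiftG 𝒜) 3) {X Y Z : V}
    (hX : X ∈ 𝒜 1) (hY : Y ∈ 𝒜 1) (hZ : Z ∈ 𝒜 1) : V :=
  c (fun _ => -1) ![secE hX, secE hY, secE hZ]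

/-- Evaluation of a vector valued 3-form on a bivector and two sections;
for the extension `H̲` of a 3-form `H` this computes `H̲(π, X, Y) = π^♯(H(X,Y,·))`. -/
def evalPXY (c : GForm (shiftG 𝒜) 3) {p X Y : V}
    (hp : p ∈ 𝒜 2) (hX : X ∈ 𝒜 1) (hY : Y ∈ 𝒜 1) : V :=
  c (Fin.cons 0 (fun _ => -1)) (Fin.cons (bivE hp) ![secE hX, secE hY])

/-- The Nijenhuis torsion `T_μ N (X,Y) = [NX, NY] - N[X,Y]_N` of a bundle map, expressed
via its extension by derivation `D`. -/
def torsionN (G : Gerstenhaber 𝒜) (D : V →ₗ[ℝ] V) (X Y : V) : V :=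
  G.bracket (D X) (D Y) - D (G.bracket (D X) Y + G.bracket X (D Y) - D (G.bracket X Y))

/-- `nal` is the dual `N^* α` of `al` with respect to the bundle map with extension `D`. -/
def IsDualMap (G : Gerstenhaber 𝒜) (D : V →ₗ[ℝ] V) (al nal : OneForm G) : Prop :=
  ∀ X : V, X ∈ 𝒜 1 → nal.ctr X = al.ctr (D X)

/-- The Lie derivative `L_Z α` of a 1-form evaluated on a section:
`(L_Z α)(X) = ρ(Z)(α(X)) - α([Z,X]) = [Z, α(X)]_SN - α([Z,X]_SN)`. -/
def lieDer (G : Gerstenhaber 𝒜) (Z : V) (al : OneForm G) (X : V) : V :=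
  G.bracket Z (al.ctr X) - al.ctr (G.bracket Z X)

/-- The Koszul bracket `{α,β}^π_μ` evaluated on a section `X`. -/
def koszulB (G : Gerstenhaber 𝒜) (p : V) (al be : OneForm G) (X : V) : V :=
  lieDer G (al.ctr p) be X - lieDer G (be.ctr p) al X - G.bracket X (be.ctr (al.ctr p))

/-- The deformed bracket `[Z,X]_N = [NZ,X] + [Z,NX] - N[Z,X]`. -/
def brN (G : Gerstenhaber 𝒜) (D : V →ₗ[ℝ] V) (Z X : V) : V :=
  G.bracket (D Z) X + G.bracket Z (D X) - D (G.bracket Z X)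

/-- The Lie derivative for the deformed Lie algebroid structure `μ^N` (anchor `ρ ∘ N`). -/
def lieDerN (G : Gerstenhaber 𝒜) (D : V →ₗ[ℝ] V) (Z : V) (al : OneForm G) (X : V) : V :=
  G.bracket (D Z) (al.ctr X) - al.ctr (brN G D Z X)

/-- The Koszul bracket `{α,β}^π_{μ^N}` of the deformed structure, evaluated on `X`. -/
def koszulBN (G : Gerstenhaber 𝒜) (D : V →ₗ[ℝ] V) (p : V) (al be : OneForm G) (X : V) : V :=
  lieDerN G D (al.ctr p) be X - lieDerN G D (be.ctr p) al X
    - G.bracket (D X) (be.ctr (al.ctr p))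

/-- The Magri–Morosi concomitant
`C(π,N)(α,β) = ({α,β}^π_μ)_{N^*} - {α,β}^π_{μ^N}` evaluated on a section `X`, where
`nal = N^*α` and `nbe = N^*β`. -/
def magriMorosi (G : Gerstenhaber 𝒜) (D : V →ₗ[ℝ] V) (p : V)
    (al be nal nbe : OneForm G) (X : V) : V :=
  (koszulB G p nal be X + koszulB G p al nbe X - koszulB G p al be (D X))
    - koszulBN G D p al be X

/-- Auxiliary: a degree vector for arity 3 forms. -/
def dvec3 (a b c : ℤ) : Fin 3 → ℤ := Fin.cons a (Fin.cons b (Fin.cons c Fin.elim0))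

/-- Auxiliary: a homogeneous 3-tuple. -/
def tuple3 {a b c : ℤ} (xa : shiftG 𝒜 a) (xb : shiftG 𝒜 b) (xc : shiftG 𝒜 c) :
    (i : Fin 3) → shiftG 𝒜 (dvec3 a b c i) :=
  Fin.cons xa (Fin.cons xb (Fin.cons xc finZeroElim))

/-- `D` applied to a homogeneous element, staying in the same degree. -/
def applyD {G : Gerstenhaber 𝒜} {D : V →ₗ[ℝ] V} (hD : IsExtDer G D) {i : ℤ}
    (p : shiftG 𝒜 i) : shiftG 𝒜 i :=
  ⟨D p, hD.grading (i + 2) p p.2⟩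

end Algebroid

section MoreHelpers

variable {V : Type*} [AddCommGroup V] [Module ℝ V] {𝒜 : ℤ → Submodule ℝ V}

lemma ctr_biv_mem (G : Gerstenhaber 𝒜) (al : OneForm G) {p : V} (hp : p ∈ 𝒜 2) :
    al.ctr p ∈ 𝒜 1 := by
  have h := al.ctr_mem 2 p hp
  norm_num at h
  exact h

/-- The 2-form `l_2(P,Q) := (-1)^{|P|}[P,Q]_SN` as a formal sum of forms on `Γ(∧A)[2]`. -/
def l2MF (G : Gerstenhaber 𝒜) : MultiForm (shiftG 𝒜) :=
  singleF (shiftG 𝒜) 2 (l2G G (shiftG 𝒜))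

variable (𝒜) in
/-- The extension by derivation `N̲` of a bundle map as a formal sum of forms. -/
def nMF (D : V →ₗ[ℝ] V) : MultiForm (shiftG 𝒜) :=
  singleF (shiftG 𝒜) 1 (extDerForm (shiftG 𝒜) D)

variable (𝒜) in
/-- A multivector (e.g. a bivector `π`) as a vector valued 0-form. -/
def bivMF (p : V) : MultiForm (shiftG 𝒜) :=
  singleF (shiftG 𝒜) 0 (elemForm (shiftG 𝒜) p)

/-- The extension by derivation `κ̲` of a `k`-form as a formal sum of forms. -/
def formMF {k : ℕ} (c : GForm (shiftG 𝒜) k) : MultiForm (shiftG 𝒜) :=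
  singleF (shiftG 𝒜) k c

end MoreHelpers
section Helpers1
variable {V : Type*} [AddCommGroup V] [Module ℝ V] {𝒢 : ℤ → Submodule ℝ V}

lemma GForm_congr {k : ℕ} (K : GForm 𝒢 k) {d d' : Fin k → ℤ} (hd : d = d')
    {x : (i : Fin k) → 𝒢 (d i)} {x' : (i : Fin k) → 𝒢 (d' i)}
    (hx : ∀ i, (x i : V) = (x' i : V)) : K d x = K d' x' := by
  subst hd
  have hxx : x = x' := funext fun i => Subtype.ext (hx i)
  rw [hxx]

lemma koszulSign_one {n : ℕ} (d : Fin n → ℤ) : koszulSign d 1 = 1 := by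
  unfold koszulSign
  rw [Finset.filter_false_of_mem, Finset.prod_empty]
  rintro p _ ⟨h1, h2⟩
  simp only [Equiv.Perm.coe_one, id] at h2
  exact absurd (h1.trans h2) (lt_irrefl _)

lemma symK_zero {k : ℕ} {δ : ℤ} {K : GForm 𝒢 k} (h : IsSymFormOfDeg 𝒢 δ K)
    (d : Fin k → ℤ) (x : (i : Fin k) → 𝒢 (d i)) (i : Fin k) (hxi : x i = 0) :
    K d x = 0 := by
  have h1 := h.map_smul d x i 0 (x i)
  rw [zero_smul, Function.update_eq_self, show Function.update x i (0 : 𝒢 (d i)) = x by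
    rw [← hxi, Function.update_eq_self], zero_smul] at h1
  exact h1

lemma prj_coe [DirectSum.Decomposition 𝒢] {i : ℤ} {v : V} (hv : v ∈ 𝒢 i) :
    ((prj 𝒢 i v : 𝒢 i) : V) = v :=
  DirectSum.decompose_of_mem_same 𝒢 hv

lemma prj_zero [DirectSum.Decomposition 𝒢] (i : ℤ) : prj 𝒢 i (0 : V) = 0 := by
  unfold prj
  rw [DirectSum.decompose_zero, DirectSum.zero_apply]

lemma insertPos_zero_L [DirectSum.Decomposition 𝒢] {k l : ℕ} (δ : ℤ) (K : GForm 𝒢 k)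
    (L : GForm 𝒢 (l + 1)) (hL : ∀ d x, L d x = 0) (d : Fin (k + l) → ℤ)
    (x : (i : Fin (k + l)) → 𝒢 (d i)) : insertPos 𝒢 δ K L d x = 0 := by
  unfold insertPos
  exact Finset.sum_eq_zero fun σ _ => by rw [hL, smul_zero]

lemma insertPos_zero_KL [DirectSum.Decomposition 𝒢] {k l : ℕ} (δ : ℤ) (K : GForm 𝒢 k)
    (L : GForm 𝒢 (l + 1)) (hK : ∀ d x, K d x = 0)
    (hL : ∀ (d : Fin (l + 1) → ℤ) (x : (i : Fin (l + 1)) → 𝒢 (d i)), x 0 = 0 → L d x = 0)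
    (d : Fin (k + l) → ℤ) (x : (i : Fin (k + l)) → 𝒢 (d i)) :
    insertPos 𝒢 δ K L d x = 0 := by
  unfold insertPos
  refine Finset.sum_eq_zero fun σ _ => ?_
  rw [hL _ _ ?_, smul_zero]
  show (prj 𝒢 _ (K (fun i => d (σ (Fin.castAdd l i))) (fun i => x (σ (Fin.castAdd l i)))) :
    𝒢 _) = 0
  rw [hK, prj_zero]

lemma extDerForm_zero_arg (D : V →ₗ[ℝ] V) (d : Fin 1 → ℤ)
    (x : (i : Fin 1) → 𝒢 (d i)) (hx : x 0 = 0) : extDerForm 𝒢 D d x = 0 := by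
  unfold extDerForm
  rw [hx]
  exact map_zero D

end Helpers1
section Ctr
variable {V : Type*} [AddCommGroup V] [Module ℝ V] {𝒜 : ℤ → Submodule ℝ V}

lemma sign_combine (i j : ℤ) :
    ((-1 : ℤ) ^ (i * (j + 2)).natAbs) * ((-1 : ℤ) ^ ((j + 1) * i).natAbs) =
      (-1 : ℤ) ^ i.natAbs := by
  rcases Int.even_or_odd i with hi | hi
  · rw [Even.neg_one_pow (Int.natAbs_even.mpr (hi.mul_right _)),
      Even.neg_one_pow (Int.natAbs_even.mpr (hi.mul_left _)),
      Even.neg_one_pow (Int.natAbs_even.mpr hi), one_mul]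
  · rcases Int.even_or_odd j with hj | hj
    · rw [Even.neg_one_pow (Int.natAbs_even.mpr (Even.mul_left (hj.add even_two) _)),
        Odd.neg_one_pow (Int.natAbs_odd.mpr ((hj.add_one).mul hi)),
        Odd.neg_one_pow (Int.natAbs_odd.mpr hi), one_mul]
    · rw [Odd.neg_one_pow (Int.natAbs_odd.mpr (hi.mul (hj.add_even even_two))),
        Even.neg_one_pow (Int.natAbs_even.mpr (Even.mul_right (by
          rcases hj with ⟨m, hm⟩; exact ⟨m + 1, by omega⟩) _)),
        Odd.neg_one_pow (Int.natAbs_odd.mpr hi), mul_one]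

variable (G : Gerstenhaber 𝒜)

def ctrComp [DirectSum.Decomposition (shiftG 𝒜)] (c3 : GForm (shiftG 𝒜) 3) {δ : ℤ}
    (hs : IsSymFormOfDeg (shiftG 𝒜) δ c3) {X Y : V} (hX : X ∈ 𝒜 1) (hY : Y ∈ 𝒜 1)
    (i : ℤ) : (shiftG 𝒜 i) →ₗ[ℝ] V where
  toFun w := c3 (Fin.cons i (fun _ => -1)) (Fin.cons w ![secE hX, secE hY])
  map_add' a b := by
    have h := hs.map_add (Fin.cons i fun _ => -1) (Fin.cons a ![secE hX, secE hY]) 0 a b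
    erw [Fin.update_cons_zero, Fin.update_cons_zero, Fin.update_cons_zero] at h
    exact h
  map_smul' c a := by
    have h := hs.map_smul (Fin.cons i fun _ => -1) (Fin.cons a ![secE hX, secE hY]) 0 c a
    erw [Fin.update_cons_zero, Fin.update_cons_zero] at h
    exact h

def ctrMap [DirectSum.Decomposition (shiftG 𝒜)] (c3 : GForm (shiftG 𝒜) 3) {δ : ℤ}
    (hs : IsSymFormOfDeg (shiftG 𝒜) δ c3) {X Y : V} (hX : X ∈ 𝒜 1) (hY : Y ∈ 𝒜 1) :
    V →ₗ[ℝ] V :=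
  (DirectSum.toModule ℝ ℤ V (fun i => ctrComp c3 hs hX hY i)) ∘ₗ
    (DirectSum.decomposeLinearEquiv (shiftG 𝒜)).toLinearMap

lemma ctrMap_apply_of_mem [DirectSum.Decomposition (shiftG 𝒜)] (c3 : GForm (shiftG 𝒜) 3)
    {δ : ℤ} (hs : IsSymFormOfDeg (shiftG 𝒜) δ c3) {X Y : V} (hX : X ∈ 𝒜 1) (hY : Y ∈ 𝒜 1)
    {w : V} {i : ℤ} (hw : w ∈ shiftG 𝒜 i) :
    ctrMap c3 hs hX hY w
      = c3 (Fin.cons i fun _ => -1) (Fin.cons ⟨w, hw⟩ ![secE hX, secE hY]) := by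
  unfold ctrMap
  rw [LinearMap.comp_apply]
  have h1 : (DirectSum.decomposeLinearEquiv (shiftG 𝒜)).toLinearMap w
      = DirectSum.lof ℝ ℤ (fun i => shiftG 𝒜 i) i ⟨w, hw⟩ := by
    rw [DirectSum.lof_eq_of]
    exact (DirectSum.decompose_of_mem (shiftG 𝒜) hw :)
  rw [h1, DirectSum.toModule_lof]
  rfl

end Ctr
section OneForms
variable {V : Type*} [AddCommGroup V] [Module ℝ V] {𝒜 : ℤ → Submodule ℝ V}

lemma ctrMap_mem [DirectSum.Decomposition (shiftG 𝒜)] (G : Gerstenhaber 𝒜)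
    (c3 : GForm (shiftG 𝒜) 3) (hH : IsFormExt G c3) {X Y : V} (hX : X ∈ 𝒜 1) (hY : Y ∈ 𝒜 1)
    {i : ℤ} {x : V} (hx : x ∈ 𝒜 i) : ctrMap c3 hH.symm hX hY x ∈ 𝒜 (i - 1) := by
  have hx' : x ∈ shiftG 𝒜 (i - 2) := mem_shift (by ring) hx
  rw [ctrMap_apply_of_mem c3 hH.symm hX hY hx']
  have h := hH.symm.mem_grading (Fin.cons (i - 2) fun _ => -1)
    (Fin.cons ⟨x, hx'⟩ ![secE hX, secE hY])
  have e : (∑ j : Fin 3, (Fin.cons (i - 2) fun _ => (-1 : ℤ)) j) + ((2 : ℕ) - 1 : ℤ)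
      = i - 3 := by
    simp [Fin.sum_univ_three]
    ring
  rw [e] at h
  have e2 : i - 1 = (i - 3) + 2 := by ring
  rw [e2]
  exact h

lemma ctrMap_deriv [DirectSum.Decomposition (shiftG 𝒜)] (G : Gerstenhaber 𝒜)
    (c3 : GForm (shiftG 𝒜) 3) (hH : IsFormExt G c3) {X Y : V} (hX : X ∈ 𝒜 1) (hY : Y ∈ 𝒜 1)
    (i : ℤ) (x y : V) (hx : x ∈ 𝒜 i) :
    ctrMap c3 hH.symm hX hY (G.wedge x y)
      = G.wedge (ctrMap c3 hH.symm hX hY x) y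
        + ((-1 : ℤ) ^ i.natAbs) • G.wedge x (ctrMap c3 hH.symm hX hY y) := by
  set al := ctrMap c3 hH.symm hX hY with hal
  induction y using DirectSum.Decomposition.inductionOn (ℳ := shiftG 𝒜) with
  | zero => simp
  | homogeneous m =>
    rename_i j
    obtain ⟨y, hy⟩ := m
    show al (G.wedge x y) = G.wedge (al x) y + _ • G.wedge x (al y)
    have hxy : G.wedge x y ∈ shiftG 𝒜 (i + j) := by
      have h := G.wedge_mem i (j + 2) x y hx hy
      exact mem_shift (by ring) h
    rw [hal, ctrMap_apply_of_mem c3 hH.symm hX hY hxy]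
    have hQ : x ∈ 𝒜 ((i - 2) + 2) := by rwa [sub_add_cancel]
    have hd := hH.deriv (i - 2) j x y hQ hy (fun _ => -1) ![secE hX, secE hY]
    have hxy' : G.wedge x y ∈ shiftG 𝒜 ((i - 2) + j + 2) :=
      wedge_mem_shift G hQ hy
    have hL : c3 (Fin.cons (i + j) fun _ => -1)
          (Fin.cons (⟨G.wedge x y, hxy⟩ : shiftG 𝒜 (i + j)) ![secE hX, secE hY])
        = c3 (Fin.cons ((i - 2) + j + 2) fun _ => -1)
          (Fin.cons (⟨G.wedge x y, hxy'⟩ : shiftG 𝒜 ((i - 2) + j + 2)) ![secE hX, secE hY]) := by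
      refine GForm_congr c3 ?_ ?_
      · funext t
        refine Fin.cases ?_ (fun t' => ?_) t
        · show i + j = (i - 2) + j + 2
          ring
        · rfl
      · intro t
        refine Fin.cases rfl (fun t' => ?_) t
        rfl
    refine hL.trans (hd.trans ?_)
    have hax : c3 (Fin.cons (i - 2) fun _ => -1)
        (Fin.cons (⟨x, hQ⟩ : shiftG 𝒜 (i - 2)) ![secE hX, secE hY]) = al x := by
      rw [hal, ctrMap_apply_of_mem c3 hH.symm hX hY (mem_shift (i := i - 2) (by ring) hx)]
      rfl
    have hay : c3 (Fin.cons j fun _ => -1)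
        (Fin.cons (⟨y, hy⟩ : shiftG 𝒜 j) ![secE hX, secE hY]) = al y := by
      rw [hal, ctrMap_apply_of_mem c3 hH.symm hX hY hy]
      rfl
    rw [hax, hay]
    have hcy : al y ∈ 𝒜 (j + 1) := by
      have := ctrMap_mem G c3 hH hX hY (i := j + 2) (x := y) hy
      rwa [show (j + 2 : ℤ) - 1 = j + 1 from by ring] at this
    rw [G.wedge_comm (j + 1) i (al y) x hcy hx, smul_smul]
    have es : ((i - 2) + 2) = i := by ring
    rw [es, sign_combine]
  | add y₁ y₂ ih₁ ih₂ =>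
    simp only [map_add, smul_add]
    rw [ih₁, ih₂]
    abel

def alForm [DirectSum.Decomposition (shiftG 𝒜)] (G : Gerstenhaber 𝒜)
    (c3 : GForm (shiftG 𝒜) 3) (hH : IsFormExt G c3) {X Y : V} (hX : X ∈ 𝒜 1) (hY : Y ∈ 𝒜 1) :
    OneForm G where
  ctr := ctrMap c3 hH.symm hX hY
  ctr_mem i x hx := ctrMap_mem G c3 hH hX hY hx
  ctr_deriv i x y hx := ctrMap_deriv G c3 hH hX hY i x y hx

def nalForm (G : Gerstenhaber 𝒜) (D : V →ₗ[ℝ] V) (hD : IsExtDer G D) (al : OneForm G) :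
    OneForm G where
  ctr := al.ctr ∘ₗ D - D ∘ₗ al.ctr
  ctr_mem i x hx := by
    simp only [LinearMap.sub_apply, LinearMap.comp_apply]
    exact sub_mem (al.ctr_mem i (D x) (hD.grading i x hx))
      (hD.grading (i - 1) _ (al.ctr_mem i x hx))
  ctr_deriv i x y hx := by
    simp only [LinearMap.sub_apply, LinearMap.comp_apply]
    rw [hD.deriv x y, map_add, al.ctr_deriv i (D x) y (hD.grading i x hx),
      al.ctr_deriv i x (D y) hx, al.ctr_deriv i x y hx, map_add,
      hD.deriv (al.ctr x) y, map_zsmul D, hD.deriv x (al.ctr y)]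
    rw [map_sub (G.wedge), LinearMap.sub_apply, map_sub (G.wedge x), smul_sub, smul_add]
    abel

lemma dual_al_nal (G : Gerstenhaber 𝒜) (D : V →ₗ[ℝ] V) (hD : IsExtDer G D)
    (al : OneForm G) : IsDualMap G D al (nalForm G D hD al) := fun w hw => by
  show (al.ctr ∘ₗ D - D ∘ₗ al.ctr) w = al.ctr (D w)
  simp only [LinearMap.sub_apply, LinearMap.comp_apply]
  rw [hD.on_fun (al.ctr w) (by simpa using al.ctr_mem 1 w hw), sub_zero]

end OneForms
section MainCalc
variable {V : Type*} [AddCommGroup V] [Module ℝ V] {𝒜 : ℤ → Submodule ℝ V}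
variable [DirectSum.Decomposition (shiftG 𝒜)]

lemma coe_arg_congr {𝒢 : ℤ → Submodule ℝ V} {n : ℕ} {d : Fin n → ℤ}
    (x : (i : Fin n) → 𝒢 (d i)) {a b : Fin n} (h : a = b) :
    ((x a : 𝒢 (d a)) : V) = ((x b : 𝒢 (d b)) : V) := by rw [h]

lemma K1_zero_2 (c3 : GForm (shiftG 𝒜) 3) {δ : ℤ} (hs : IsSymFormOfDeg (shiftG 𝒜) δ c3)
    (D : V →ₗ[ℝ] V) (d : Fin 2 → ℤ) (x : (i : Fin 2) → shiftG 𝒜 (d i)) :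
    rnBracketM (shiftG 𝒜) 0 1 (nMF 𝒜 D) (formMF c3) 2 d x = 0 := by
  simp only [rnBracketM, Pi.sub_apply, Pi.smul_apply, Finset.sum_apply]
  rw [Finset.sum_eq_zero, Finset.sum_eq_zero]
  · simp
  · rintro ⟨p, hp⟩ -
    have hp4 := Finset.mem_range.mp hp
    interval_cases p
    · exact insertPos_zero_L 1 (formMF c3 0) (nMF 𝒜 D 3) (fun _ _ => rfl) _ _
    · exact insertPos_zero_L 1 (formMF c3 1) (nMF 𝒜 D 2) (fun _ _ => rfl) _ _
    · exact insertPos_zero_KL 1 (formMF c3 2) (nMF 𝒜 D 1) (fun _ _ => rfl)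
        (fun d x hx => extDerForm_zero_arg D d x hx) _ _
    · rfl
  · rintro ⟨p, hp⟩ -
    have hp4 := Finset.mem_range.mp hp
    interval_cases p
    · exact insertPos_zero_KL 0 (nMF 𝒜 D 0) (formMF c3 3) (fun _ _ => rfl)
        (fun d x hx => symK_zero hs d x 0 hx) _ _
    · exact insertPos_zero_L 0 (nMF 𝒜 D 1) (formMF c3 2) (fun _ _ => rfl) _ _
    · exact insertPos_zero_L 0 (nMF 𝒜 D 2) (formMF c3 1) (fun _ _ => rfl) _ _
    · rfl

lemma K1_zero_1 (c3 : GForm (shiftG 𝒜) 3)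
    (D : V →ₗ[ℝ] V) (d : Fin 1 → ℤ) (x : (i : Fin 1) → shiftG 𝒜 (d i)) :
    rnBracketM (shiftG 𝒜) 0 1 (nMF 𝒜 D) (formMF c3) 1 d x = 0 := by
  simp only [rnBracketM, Pi.sub_apply, Pi.smul_apply, Finset.sum_apply]
  rw [Finset.sum_eq_zero, Finset.sum_eq_zero]
  · simp
  · rintro ⟨p, hp⟩ -
    have hp4 := Finset.mem_range.mp hp
    interval_cases p
    · exact insertPos_zero_L 1 (formMF c3 0) (nMF 𝒜 D 2) (fun _ _ => rfl) _ _
    · exact insertPos_zero_KL 1 (formMF c3 1) (nMF 𝒜 D 1) (fun _ _ => rfl)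
        (fun d x hx => extDerForm_zero_arg D d x hx) _ _
    · rfl
  · rintro ⟨p, hp⟩ -
    have hp4 := Finset.mem_range.mp hp
    interval_cases p
    · exact insertPos_zero_L 0 (nMF 𝒜 D 0) (formMF c3 2) (fun _ _ => rfl) _ _
    · exact insertPos_zero_L 0 (nMF 𝒜 D 1) (formMF c3 1) (fun _ _ => rfl) _ _
    · rfl

lemma K2_zero_1 (c3 : GForm (shiftG 𝒜) 3) (π : V)
    (d : Fin 1 → ℤ) (x : (i : Fin 1) → shiftG 𝒜 (d i)) :
    rnBracketM (shiftG 𝒜) 0 1 (bivMF 𝒜 π) (formMF c3) 1 d x = 0 := by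
  simp only [rnBracketM, Pi.sub_apply, Pi.smul_apply, Finset.sum_apply]
  rw [Finset.sum_eq_zero, Finset.sum_eq_zero]
  · simp
  · rintro ⟨p, hp⟩ -
    have hp4 := Finset.mem_range.mp hp
    interval_cases p
    · exact insertPos_zero_L 1 (formMF c3 0) (bivMF 𝒜 π 2) (fun _ _ => rfl) _ _
    · exact insertPos_zero_L 1 (formMF c3 1) (bivMF 𝒜 π 1) (fun _ _ => rfl) _ _
    · rfl
  · rintro ⟨p, hp⟩ -
    have hp4 := Finset.mem_range.mp hp
    interval_cases p
    · exact insertPos_zero_L 0 (bivMF 𝒜 π 0) (formMF c3 2) (fun _ _ => rfl) _ _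
    · exact insertPos_zero_L 0 (bivMF 𝒜 π 1) (formMF c3 1) (fun _ _ => rfl) _ _
    · rfl

lemma K2_zero_3 (c3 : GForm (shiftG 𝒜) 3) {δ : ℤ} (hs : IsSymFormOfDeg (shiftG 𝒜) δ c3)
    (π : V) (d : Fin 3 → ℤ) (x : (i : Fin 3) → shiftG 𝒜 (d i)) :
    rnBracketM (shiftG 𝒜) 0 1 (bivMF 𝒜 π) (formMF c3) 3 d x = 0 := by
  simp only [rnBracketM, Pi.sub_apply, Pi.smul_apply, Finset.sum_apply]
  rw [Finset.sum_eq_zero, Finset.sum_eq_zero]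
  · simp
  · rintro ⟨p, hp⟩ -
    have hp4 := Finset.mem_range.mp hp
    interval_cases p
    · exact insertPos_zero_L 1 (formMF c3 0) (bivMF 𝒜 π 4) (fun _ _ => rfl) _ _
    · exact insertPos_zero_L 1 (formMF c3 1) (bivMF 𝒜 π 3) (fun _ _ => rfl) _ _
    · exact insertPos_zero_L 1 (formMF c3 2) (bivMF 𝒜 π 2) (fun _ _ => rfl) _ _
    · exact insertPos_zero_L 1 (formMF c3 3) (bivMF 𝒜 π 1) (fun _ _ => rfl) _ _
    · rfl
  · rintro ⟨p, hp⟩ -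
    have hp4 := Finset.mem_range.mp hp
    interval_cases p
    · exact insertPos_zero_L 0 (bivMF 𝒜 π 0) (formMF c3 4) (fun _ _ => rfl) _ _
    · exact insertPos_zero_KL 0 (bivMF 𝒜 π 1) (formMF c3 3) (fun _ _ => rfl)
        (fun d x hx => symK_zero hs d x 0 hx) _ _
    · exact insertPos_zero_L 0 (bivMF 𝒜 π 2) (formMF c3 2) (fun _ _ => rfl) _ _
    · exact insertPos_zero_L 0 (bivMF 𝒜 π 3) (formMF c3 1) (fun _ _ => rfl) _ _
    · rfl

end MainCalc
section K2Eval
variable {V : Type*} [AddCommGroup V] [Module ℝ V] {𝒜 : ℤ → Submodule ℝ V}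
variable [DirectSum.Decomposition (shiftG 𝒜)]

lemma K2_eval_2 (c3 : GForm (shiftG 𝒜) 3) (π : V)
    (d : Fin 2 → ℤ) (x : (i : Fin 2) → shiftG 𝒜 (d i)) :
    rnBracketM (shiftG 𝒜) 0 1 (bivMF 𝒜 π) (formMF c3) 2 d x
      = c3 (Fin.cons 0 d) (Fin.cons (prj (shiftG 𝒜) 0 π) x) := by
  simp only [rnBracketM, Pi.sub_apply, Pi.smul_apply, Finset.sum_apply]
  have hB : (∑ p ∈ (Finset.range (2 + 2)).attach,
      castForm (by have := Finset.mem_range.mp p.2; omega)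
        (insertionOp (shiftG 𝒜) 1 (formMF c3 p.1) (bivMF 𝒜 π (2 + 1 - p.1))) d x) = 0 := by
    refine Finset.sum_eq_zero ?_
    rintro ⟨p, hp⟩ -
    have hp4 := Finset.mem_range.mp hp
    interval_cases p
    · exact insertPos_zero_L 1 (formMF c3 0) (bivMF 𝒜 π 3) (fun _ _ => rfl) _ _
    · exact insertPos_zero_L 1 (formMF c3 1) (bivMF 𝒜 π 2) (fun _ _ => rfl) _ _
    · exact insertPos_zero_L 1 (formMF c3 2) (bivMF 𝒜 π 1) (fun _ _ => rfl) _ _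
    · rfl
  rw [hB, smul_zero, sub_zero]
  rw [Finset.sum_eq_single_of_mem (⟨0, by decide⟩ : {p // p ∈ Finset.range (2 + 2)})
    (Finset.mem_attach _ _) ?_]
  · show insertPos (shiftG 𝒜) 0 (elemForm (shiftG 𝒜) π) c3 d x = _
    unfold insertPos
    rw [show unshuffles 0 (0 + 2) = {1} from by decide, Finset.sum_singleton,
      koszulSign_one, one_smul]
    refine GForm_congr c3 ?_ ?_
    · funext t
      refine Fin.cases ?_ (fun t' => ?_) t
      · simp
      · show d ((1 : Equiv.Perm (Fin (0 + 2))) (Fin.natAdd 0 t')) = d t'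
        congr 1
        ext
        simp [Fin.natAdd]
    · intro t
      refine Fin.cases rfl (fun t' => ?_) t
      show ((x ((1 : Equiv.Perm (Fin (0 + 2))) (Fin.natAdd 0 t')) : shiftG 𝒜 _) : V) = _
      exact coe_arg_congr x (by ext; simp [Fin.natAdd])
  · rintro ⟨p, hp⟩ - hne
    have hp4 := Finset.mem_range.mp hp
    interval_cases p
    · exact absurd (Subtype.ext rfl) hne
    · exact insertPos_zero_L 0 (bivMF 𝒜 π 1) (formMF c3 2) (fun _ _ => rfl) _ _
    · exact insertPos_zero_L 0 (bivMF 𝒜 π 2) (formMF c3 1) (fun _ _ => rfl) _ _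
    · rfl

end K2Eval
section K1Eval
variable {V : Type*} [AddCommGroup V] [Module ℝ V] {𝒜 : ℤ → Submodule ℝ V}
variable [DirectSum.Decomposition (shiftG 𝒜)]

lemma K1_eval_3 (G : Gerstenhaber 𝒜) (c3 : GForm (shiftG 𝒜) 3) (hH : IsFormExt G c3)
    (D : V →ₗ[ℝ] V) (hD : IsExtDer G D) (π : V) (hπ : π ∈ 𝒜 2)
    {X Y : V} (hX : X ∈ 𝒜 1) (hY : Y ∈ 𝒜 1) :
    rnBracketM (shiftG 𝒜) 0 1 (nMF 𝒜 D) (formMF c3) 3 (Fin.cons 0 fun _ => -1)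
        (Fin.cons (bivE hπ) ![secE hX, secE hY])
      = c3 (Fin.cons 0 fun _ => -1)
          (Fin.cons (⟨D π, mem_shift (by norm_num) (hD.grading 2 π hπ)⟩ : shiftG 𝒜 0)
            ![secE hX, secE hY])
        + (evalPXY c3 hπ (hD.grading 1 X hX) hY + evalPXY c3 hπ hX (hD.grading 1 Y hY))
        - D (c3 (Fin.cons 0 fun _ => -1) (Fin.cons (bivE hπ) ![secE hX, secE hY])) := by
  have hDπ : D π ∈ shiftG 𝒜 0 := mem_shift (by norm_num) (hD.grading 2 π hπ)
  have hDX : D X ∈ 𝒜 1 := hD.grading 1 X hX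
  have hDY : D Y ∈ 𝒜 1 := hD.grading 1 Y hY
  simp only [rnBracketM, Pi.sub_apply, Pi.smul_apply, Finset.sum_apply]
  rw [Finset.sum_eq_single_of_mem (⟨1, by decide⟩ : {p // p ∈ Finset.range (3 + 2)})
    (Finset.mem_attach _ _) ?_, Finset.sum_eq_single_of_mem
      (⟨3, by decide⟩ : {p // p ∈ Finset.range (3 + 2)}) (Finset.mem_attach _ _) ?_,
    show ((-1 : ℤ) ^ ((0 : ℤ) * 1).natAbs) = 1 from by norm_num, one_smul]
  · have e1 : insertPos (shiftG 𝒜) 0 (extDerForm (shiftG 𝒜) D) c3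
        (Fin.cons 0 fun _ => -1) (Fin.cons (bivE hπ) ![secE hX, secE hY])
        = c3 (Fin.cons 0 fun _ => -1)
            (Fin.cons (⟨D π, hDπ⟩ : shiftG 𝒜 0) ![secE hX, secE hY])
          + (evalPXY c3 hπ hDX hY + evalPXY c3 hπ hX hDY) := by
      unfold insertPos
      rw [show unshuffles 1 (1 + 2)
          = {1, Equiv.swap 0 1, Equiv.swap 1 2 * Equiv.swap 0 1} from by decide,
        Finset.sum_insert (by decide), Finset.sum_insert (by decide), Finset.sum_singleton]
      refine congrArg₂ (· + ·) ?_ (congrArg₂ (· + ·) ?_ ?_)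
      · rw [koszulSign_one, one_smul]
        refine GForm_congr c3 (funext fun t => by revert t; decide) ?_
        intro i
        refine Fin.cases ?_ (fun t' => ?_) i
        · exact prj_coe hDπ
        · fin_cases t' <;> rfl
      · rw [show koszulSign (Fin.cons 0 fun _ => -1 : Fin 3 → ℤ) (Equiv.swap 0 1) = 1
          from by decide, one_smul]
        have hsym := hH.symm.symm (Fin.cons 0 fun _ => -1) (Equiv.swap 0 1)
          (Fin.cons (bivE hπ) ![secE hDX, secE hY])
        rw [show koszulSign (Fin.cons 0 fun _ => -1 : Fin 3 → ℤ) (Equiv.swap 0 1) = 1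
          from by decide, one_smul] at hsym
        refine Eq.trans (GForm_congr c3 (funext fun t => by revert t; decide) ?_) hsym
        intro i
        refine Fin.cases ?_ (fun t' => ?_) i
        · exact prj_coe (mem_shift (by decide) hDX)
        · fin_cases t' <;> rfl
      · rw [show koszulSign (Fin.cons 0 fun _ => -1 : Fin 3 → ℤ)
          (Equiv.swap 1 2 * Equiv.swap 0 1) = -1 from by decide]
        have hsym := hH.symm.symm (Fin.cons 0 fun _ => -1)
          (Equiv.swap 1 2 * Equiv.swap 0 1) (Fin.cons (bivE hπ) ![secE hX, secE hDY])
        rw [show koszulSign (Fin.cons 0 fun _ => -1 : Fin 3 → ℤ)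
          (Equiv.swap 1 2 * Equiv.swap 0 1) = -1 from by decide] at hsym
        refine Eq.trans (congrArg (fun v => (-1 : ℤ) • v)
          (Eq.trans (GForm_congr c3 (funext fun t => by revert t; decide) ?_) hsym)) ?_
        · intro i
          refine Fin.cases ?_ (fun t' => ?_) i
          · exact prj_coe (mem_shift (by decide) hDY)
          · fin_cases t' <;> rfl
        · show (-1 : ℤ) • ((-1 : ℤ) • c3 (Fin.cons 0 fun _ => -1)
            (Fin.cons (bivE hπ) ![secE hX, secE hDY])) = evalPXY c3 hπ hX hDY
          rw [smul_smul, show ((-1 : ℤ) * -1) = 1 from by norm_num, one_smul]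
          rfl
    have e3 : insertPos (shiftG 𝒜) 1 c3 (extDerForm (shiftG 𝒜) D)
        (Fin.cons 0 fun _ => -1) (Fin.cons (bivE hπ) ![secE hX, secE hY])
        = D (c3 (Fin.cons 0 fun _ => -1) (Fin.cons (bivE hπ) ![secE hX, secE hY])) := by
      unfold insertPos
      rw [show unshuffles 3 (3 + 0) = {1} from by decide, Finset.sum_singleton,
        koszulSign_one, one_smul]
      refine congrArg D (Eq.trans (congrArg
        (fun v => ((prj (shiftG 𝒜) _ v : shiftG 𝒜 _) : V))
        (GForm_congr c3 (funext fun t => by revert t; decide) ?_))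
        (prj_coe (hH.symm.mem_grading _ _)))
      intro i
      fin_cases i <;> rfl
    show insertPos (shiftG 𝒜) 0 (extDerForm (shiftG 𝒜) D) c3
        (Fin.cons 0 fun _ => -1) (Fin.cons (bivE hπ) ![secE hX, secE hY])
      - insertPos (shiftG 𝒜) 1 c3 (extDerForm (shiftG 𝒜) D)
        (Fin.cons 0 fun _ => -1) (Fin.cons (bivE hπ) ![secE hX, secE hY]) = _
    rw [e1, e3]
  · rintro ⟨p, hp⟩ - hne
    have hp5 := Finset.mem_range.mp hp
    interval_cases p
    · exact insertPos_zero_L 1 (formMF c3 0) (nMF 𝒜 D 4) (fun _ _ => rfl) _ _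
    · exact insertPos_zero_L 1 (formMF c3 1) (nMF 𝒜 D 3) (fun _ _ => rfl) _ _
    · exact insertPos_zero_L 1 (formMF c3 2) (nMF 𝒜 D 2) (fun _ _ => rfl) _ _
    · exact absurd (Subtype.ext rfl) hne
    · rfl
  · rintro ⟨p, hp⟩ - hne
    have hp5 := Finset.mem_range.mp hp
    interval_cases p
    · exact insertPos_zero_L 0 (nMF 𝒜 D 0) (formMF c3 4) (fun _ _ => rfl) _ _
    · exact absurd (Subtype.ext rfl) hne
    · exact insertPos_zero_L 0 (nMF 𝒜 D 2) (formMF c3 2) (fun _ _ => rfl) _ _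
    · exact insertPos_zero_L 0 (nMF 𝒜 D 3) (formMF c3 1) (fun _ _ => rfl) _ _
    · rfl
end K1Eval
section OuterTerms
variable {V : Type*} [AddCommGroup V] [Module ℝ V] {𝒜 : ℤ → Submodule ℝ V}
variable [DirectSum.Decomposition (shiftG 𝒜)]

lemma B1_term (G : Gerstenhaber 𝒜) (c3 : GForm (shiftG 𝒜) 3) (hH : IsFormExt G c3)
    (D : V →ₗ[ℝ] V) (hD : IsExtDer G D) (π : V) (hπ : π ∈ 𝒜 2)
    {X Y : V} (hX : X ∈ 𝒜 1) (hY : Y ∈ 𝒜 1) :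
    insertPos (shiftG 𝒜) 0 (elemForm (shiftG 𝒜) π)
        (rnBracketM (shiftG 𝒜) 0 1 (nMF 𝒜 D) (formMF c3) 3)
        (fun _ => -1) ![secE hX, secE hY]
      = c3 (Fin.cons 0 fun _ => -1)
          (Fin.cons (⟨D π, mem_shift (by norm_num) (hD.grading 2 π hπ)⟩ : shiftG 𝒜 0)
            ![secE hX, secE hY])
        + (evalPXY c3 hπ (hD.grading 1 X hX) hY + evalPXY c3 hπ hX (hD.grading 1 Y hY))
        - D (c3 (Fin.cons 0 fun _ => -1) (Fin.cons (bivE hπ) ![secE hX, secE hY])) := by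
  unfold insertPos
  rw [show unshuffles 0 (0 + 2) = {1} from by decide, Finset.sum_singleton,
    koszulSign_one, one_smul]
  refine Eq.trans (GForm_congr (rnBracketM (shiftG 𝒜) 0 1 (nMF 𝒜 D) (formMF c3) 3)
    (funext fun t => by revert t; decide) ?_) (K1_eval_3 G c3 hH D hD π hπ hX hY)
  intro i
  refine Fin.cases ?_ (fun t' => ?_) i
  · exact prj_coe (mem_shift (by decide) hπ)
  · fin_cases t' <;> rfl

lemma B2_term1 (G : Gerstenhaber 𝒜) (c3 : GForm (shiftG 𝒜) 3) (hH : IsFormExt G c3)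
    (D : V →ₗ[ℝ] V) (hD : IsExtDer G D) (π : V) (hπ : π ∈ 𝒜 2)
    {X Y : V} (hX : X ∈ 𝒜 1) (hY : Y ∈ 𝒜 1) :
    insertPos (shiftG 𝒜) 0 (extDerForm (shiftG 𝒜) D)
        (rnBracketM (shiftG 𝒜) 0 1 (bivMF 𝒜 π) (formMF c3) 2)
        (fun _ => -1) ![secE hX, secE hY]
      = evalPXY c3 hπ (hD.grading 1 X hX) hY + evalPXY c3 hπ hX (hD.grading 1 Y hY) := by
  have hDX : D X ∈ 𝒜 1 := hD.grading 1 X hX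
  have hDY : D Y ∈ 𝒜 1 := hD.grading 1 Y hY
  show _ = evalPXY c3 hπ hDX hY + evalPXY c3 hπ hX hDY
  unfold insertPos
  rw [show unshuffles 1 (1 + 1) = {1, Equiv.swap 0 1} from by decide,
    Finset.sum_insert (by decide), Finset.sum_singleton]
  refine congrArg₂ (· + ·) ?_ ?_
  · rw [koszulSign_one, one_smul, K2_eval_2]
    refine GForm_congr c3 (funext fun t => by revert t; decide) ?_
    intro i
    refine Fin.cases ?_ (fun t' => ?_) i
    · exact prj_coe (mem_shift (by decide) hπ)
    · refine Fin.cases ?_ (fun t'' => ?_) t'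
      · exact prj_coe (mem_shift (by decide) hDX)
      · fin_cases t'' <;> rfl
  · rw [show koszulSign (fun _ => -1 : Fin 2 → ℤ) (Equiv.swap 0 1) = -1 from by decide,
      K2_eval_2]
    have hsym := hH.symm.symm (Fin.cons 0 fun _ => -1) (Equiv.swap 1 2)
      (Fin.cons (bivE hπ) ![secE hX, secE hDY])
    rw [show koszulSign (Fin.cons 0 fun _ => -1 : Fin 3 → ℤ) (Equiv.swap 1 2) = -1
      from by decide] at hsym
    refine Eq.trans (congrArg (fun v => (-1 : ℤ) • v)
      (Eq.trans (GForm_congr c3 (funext fun t => by revert t; decide) ?_) hsym)) ?_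
    · intro i
      refine Fin.cases ?_ (fun t' => ?_) i
      · exact prj_coe (mem_shift (by decide) hπ)
      · refine Fin.cases ?_ (fun t'' => ?_) t'
        · exact prj_coe (mem_shift (by decide) hDY)
        · fin_cases t'' <;> rfl
    · show (-1 : ℤ) • ((-1 : ℤ) • c3 (Fin.cons 0 fun _ => -1)
        (Fin.cons (bivE hπ) ![secE hX, secE hDY])) = evalPXY c3 hπ hX hDY
      rw [smul_smul, show ((-1 : ℤ) * -1) = 1 from by norm_num, one_smul]
      rfl

lemma B2_term2 (G : Gerstenhaber 𝒜) (c3 : GForm (shiftG 𝒜) 3) (hH : IsFormExt G c3)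
    (D : V →ₗ[ℝ] V) (π : V) (hπ : π ∈ 𝒜 2)
    {X Y : V} (hX : X ∈ 𝒜 1) (hY : Y ∈ 𝒜 1) :
    insertPos (shiftG 𝒜) 1 (rnBracketM (shiftG 𝒜) 0 1 (bivMF 𝒜 π) (formMF c3) 2)
        (extDerForm (shiftG 𝒜) D) (fun _ => -1) ![secE hX, secE hY]
      = D (c3 (Fin.cons 0 fun _ => -1) (Fin.cons (bivE hπ) ![secE hX, secE hY])) := by
  unfold insertPos
  rw [show unshuffles 2 (2 + 0) = {1} from by decide, Finset.sum_singleton,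
    koszulSign_one, one_smul, K2_eval_2]
  refine congrArg D (Eq.trans (congrArg
    (fun v => ((prj (shiftG 𝒜) _ v : shiftG 𝒜 _) : V))
    (GForm_congr c3 (funext fun t => by revert t; decide) ?_))
    (prj_coe (hH.symm.mem_grading (Fin.cons 0 fun _ => -1)
      (Fin.cons (bivE hπ) ![secE hX, secE hY]))))
  intro i
  refine Fin.cases ?_ (fun t' => ?_) i
  · exact prj_coe (mem_shift (by decide) hπ)
  · fin_cases t' <;> rfl

end OuterTerms

set_option maxHeartbeats 1000000

/-- If `N ∘ π^♯ = π^♯ ∘ N^*`, then for all sections `X, Y`: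
`([π,[N̲,H̲]]_RN + [N̲,[π,H̲]]_RN)(X,Y) = 2 H̲(π, NX, Y) + 2 H̲(π, X, NY)`. -/
theorem rnBracket_H_eval_on_sections
    {V : Type*} [AddCommGroup V] [Module ℝ V] {𝒜 : ℤ → Submodule ℝ V}
    (G : Gerstenhaber 𝒜) [DirectSum.Decomposition (shiftG 𝒜)]
    (hmv : IsMultivecGrading 𝒜)
    (c3 : GForm (shiftG 𝒜) 3) (hH : IsFormExt G c3)
    (π : V) (hπ : π ∈ 𝒜 2)
    (D : V →ₗ[ℝ] V) (hD : IsExtDer G D)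
    (hNπ : ∀ al nal : OneForm G, IsDualMap G D al nal → D (al.ctr π) = nal.ctr π)
    (X Y : V) (hX : X ∈ 𝒜 1) (hY : Y ∈ 𝒜 1) :
    evalSec2
        (rnBracketM (shiftG 𝒜) 0 1 (bivMF 𝒜 π)
            (rnBracketM (shiftG 𝒜) 0 1 (nMF 𝒜 D) (formMF c3))
          + rnBracketM (shiftG 𝒜) 0 1 (nMF 𝒜 D)
              (rnBracketM (shiftG 𝒜) 0 1 (bivMF 𝒜 π) (formMF c3))) hX hY
      = (2 : ℝ) • evalPXY c3 hπ (hD.grading 1 X hX) hY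
        + (2 : ℝ) • evalPXY c3 hπ hX (hD.grading 1 Y hY) := by
  have hπ' : π ∈ shiftG 𝒜 0 := mem_shift (by norm_num) hπ
  have h1 : (alForm G c3 hH hX hY).ctr π
      = c3 (Fin.cons 0 fun _ => -1) (Fin.cons (bivE hπ) ![secE hX, secE hY]) :=
    ctrMap_apply_of_mem c3 hH.symm hX hY hπ'
  have h3 : (alForm G c3 hH hX hY).ctr (D π)
      = c3 (Fin.cons 0 fun _ => -1)
          (Fin.cons (⟨D π, mem_shift (by norm_num) (hD.grading 2 π hπ)⟩ : shiftG 𝒜 0)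
            ![secE hX, secE hY]) :=
    ctrMap_apply_of_mem c3 hH.symm hX hY (mem_shift (by norm_num) (hD.grading 2 π hπ))
  have hk := hNπ (alForm G c3 hH hX hY) (nalForm G D hD (alForm G c3 hH hX hY))
    (dual_al_nal G D hD (alForm G c3 hH hX hY))
  have h2 : (nalForm G D hD (alForm G c3 hH hX hY)).ctr π
      = (alForm G c3 hH hX hY).ctr (D π) - D ((alForm G c3 hH hX hY).ctr π) := rfl
  rw [h2] at hk
  have h4 : (alForm G c3 hH hX hY).ctr (D π)
      = D ((alForm G c3 hH hX hY).ctr π) + D ((alForm G c3 hH hX hY).ctr π) :=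
    sub_eq_iff_eq_add.mp hk.symm
  have key : c3 (Fin.cons 0 fun _ => -1)
      (Fin.cons (⟨D π, mem_shift (by norm_num) (hD.grading 2 π hπ)⟩ : shiftG 𝒜 0)
        ![secE hX, secE hY])
      = D (c3 (Fin.cons 0 fun _ => -1) (Fin.cons (bivE hπ) ![secE hX, secE hY]))
        + D (c3 (Fin.cons 0 fun _ => -1) (Fin.cons (bivE hπ) ![secE hX, secE hY])) := by
    rw [← h3, ← h1]
    exact h4
  unfold evalSec2
  simp only [Pi.add_apply]
  generalize hK1 : rnBracketM (shiftG 𝒜) 0 1 (nMF 𝒜 D) (formMF c3) = K1mf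
  generalize hK2 : rnBracketM (shiftG 𝒜) 0 1 (bivMF 𝒜 π) (formMF c3) = K2mf
  simp only [rnBracketM, Pi.sub_apply, Pi.smul_apply, Finset.sum_apply]
  rw [Finset.sum_eq_single_of_mem (⟨0, by decide⟩ : {p // p ∈ Finset.range (2 + 2)})
      (Finset.mem_attach _ _) ?_,
    Finset.sum_eq_zero ?_,
    Finset.sum_eq_single_of_mem (⟨1, by decide⟩ : {p // p ∈ Finset.range (2 + 2)})
      (Finset.mem_attach _ _) ?_,
    Finset.sum_eq_single_of_mem (⟨2, by decide⟩ : {p // p ∈ Finset.range (2 + 2)})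
      (Finset.mem_attach _ _) ?_,
    smul_zero, sub_zero, show ((-1 : ℤ) ^ ((0 : ℤ) * 1).natAbs) = 1 from by norm_num]
  simp only [one_smul]
  subst hK1 hK2
  show insertPos (shiftG 𝒜) 0 (elemForm (shiftG 𝒜) π)
      (rnBracketM (shiftG 𝒜) 0 1 (nMF 𝒜 D) (formMF c3) 3) (fun _ => -1) ![secE hX, secE hY]
    + (insertPos (shiftG 𝒜) 0 (extDerForm (shiftG 𝒜) D)
        (rnBracketM (shiftG 𝒜) 0 1 (bivMF 𝒜 π) (formMF c3) 2) (fun _ => -1) ![secE hX, secE hY]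
      - insertPos (shiftG 𝒜) 1 (rnBracketM (shiftG 𝒜) 0 1 (bivMF 𝒜 π) (formMF c3) 2)
          (extDerForm (shiftG 𝒜) D) (fun _ => -1) ![secE hX, secE hY])
    = (2 : ℝ) • evalPXY c3 hπ (hD.grading 1 X hX) hY
      + (2 : ℝ) • evalPXY c3 hπ hX (hD.grading 1 Y hY)
  rw [B1_term G c3 hH D hD π hπ hX hY, B2_term1 G c3 hH D hD π hπ hX hY,
    B2_term2 G c3 hH D π hπ hX hY, key,
    two_smul ℝ (evalPXY c3 hπ (hD.grading 1 X hX) hY),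
    two_smul ℝ (evalPXY c3 hπ hX (hD.grading 1 Y hY))]
  abel
  -- side goals (reverse order of creation)
  · rintro ⟨p, hp⟩ - hne
    have hp4 := Finset.mem_range.mp hp
    interval_cases p
    · exact insertPos_zero_L 1 (K2mf 0) (nMF 𝒜 D 3) (fun _ _ => rfl) _ _
    · exact insertPos_zero_L 1 (K2mf 1) (nMF 𝒜 D 2) (fun _ _ => rfl) _ _
    · exact absurd (Subtype.ext rfl) hne
    · rfl
  · rintro ⟨p, hp⟩ - hne
    subst hK2
    have hp4 := Finset.mem_range.mp hp
    interval_cases p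
    · exact insertPos_zero_KL 0 (nMF 𝒜 D 0)
        (rnBracketM (shiftG 𝒜) 0 1 (bivMF 𝒜 π) (formMF c3) 3) (fun _ _ => rfl)
        (fun d x _ => K2_zero_3 c3 hH.symm π d x) _ _
    · exact absurd (Subtype.ext rfl) hne
    · exact insertPos_zero_L 0 (nMF 𝒜 D 2)
        (rnBracketM (shiftG 𝒜) 0 1 (bivMF 𝒜 π) (formMF c3) 1) (K2_zero_1 c3 π) _ _
    · rfl
  · rintro ⟨p, hp⟩ -
    have hp4 := Finset.mem_range.mp hp
    interval_cases p
    · exact insertPos_zero_L 1 (K1mf 0) (bivMF 𝒜 π 3) (fun _ _ => rfl) _ _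
    · exact insertPos_zero_L 1 (K1mf 1) (bivMF 𝒜 π 2) (fun _ _ => rfl) _ _
    · exact insertPos_zero_L 1 (K1mf 2) (bivMF 𝒜 π 1) (fun _ _ => rfl) _ _
    · rfl
  · rintro ⟨p, hp⟩ - hne
    subst hK1
    have hp4 := Finset.mem_range.mp hp
    interval_cases p
    · exact absurd (Subtype.ext rfl) hne
    · exact insertPos_zero_L 0 (bivMF 𝒜 π 1)
        (rnBracketM (shiftG 𝒜) 0 1 (nMF 𝒜 D) (formMF c3) 2) (K1_zero_2 c3 hH.symm D) _ _
    · exact insertPos_zero_L 0 (bivMF 𝒜 π 2)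
        (rnBracketM (shiftG 𝒜) 0 1 (nMF 𝒜 D) (formMF c3) 1) (K1_zero_1 c3 D) _ _
    · rfl
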